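/- For every natural number a, C(Ω_a) = a + O(log a), where Ω_a is the number of strings of complexity at most a. -/

import Mathlib

open scoped Classical

abbrev BinStr := List Bool

/-- A decompressor: a partial computable map (program, condition) ↦ output. -/
def IsDecompressor (D : BinStr → BinStr → Part BinStr) : Prop := Partrec₂ D

/-- Conditional Kolmogorov complexity with respect to decompressor `D`. -/
noncomputable def Cc (D : BinStr → BinStr → Part BinStr) (x y : BinStr) : ℕ :=
  sInf { n | ∃ p : BinStr, p.length = n ∧ x ∈ D p y }

/-- A decompressor is universal if every decompressor is simulated via a prefix. -/
def IsUniversal (U : BinStr → BinStr → Part BinStr) : Prop :=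
  IsDecompressor U ∧ ∀ D, IsDecompressor D → ∃ c : BinStr, ∀ p y, D p y = U (c ++ p) y

/-- Unconditional complexity. -/
noncomputable def C (U : BinStr → BinStr → Part BinStr) (x : BinStr) : ℕ := Cc U x []

/-- The fixed computable encoding of a finite set of strings as a string. -/
def codeSet (A : Finset BinStr) : BinStr := Nat.bits (Encodable.encode A)

/-- Complexity of a finite set of strings. -/
noncomputable def CSet (U : BinStr → BinStr → Part BinStr) (A : Finset BinStr) : ℕ :=
  C U (codeSet A)

/-- The profile of a string `x`. -/
noncomputable def profile (U : BinStr → BinStr → Part BinStr) (x : BinStr) : Set (ℕ × ℕ) :=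
  { ml | ∃ A : Finset BinStr, x ∈ A ∧ CSet U A ≤ ml.1 ∧ Nat.log 2 A.card ≤ ml.2 }

/-- Total conditional complexity `CT(x|y)`: length of a shortest *total* program mapping y to x. -/
noncomputable def CT (U : BinStr → BinStr → Part BinStr) (x y : BinStr) : ℕ :=
  sInf { n | ∃ p : BinStr, p.length = n ∧ (∀ y' : BinStr, (U p y').Dom) ∧ x ∈ U p y }

/-- The ε-strong profile of `x`. -/
noncomputable def strongProfile (U : BinStr → BinStr → Part BinStr) (ε : ℕ) (x : BinStr) :
    Set (ℕ × ℕ) :=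
  { ml | ∃ A : Finset BinStr, x ∈ A ∧ CT U (codeSet A) x ≤ ε ∧
      CSet U A ≤ ml.1 ∧ Nat.log 2 A.card ≤ ml.2 }

/-- `Ω_m`: the number of strings of complexity at most m. -/
noncomputable def Omega (U : BinStr → BinStr → Part BinStr) (m : ℕ) : ℕ :=
  Set.ncard { x : BinStr | C U x ≤ m }

/-- The Finset of all binary strings of length n. -/
def allStr : ℕ → Finset BinStr
  | 0 => {[]}
  | n + 1 => (allStr n).image (List.cons true) ∪ (allStr n).image (List.cons false)

/-- The cylinder `{ u ++ v : v ∈ {0,1}^m }`. -/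
def cyl (u : BinStr) (m : ℕ) : Finset BinStr := (allStr m).image (fun v => u ++ v)

namespace OmegaAux


open Encodable
open Nat.Partrec (Code)
open Nat.Partrec.Code

/-- little-endian bits to nat -/
def ofBits : BinStr → ℕ := fun l => l.foldr (fun b n => Nat.bit b n) 0

lemma ofBits_cons (b : Bool) (l : BinStr) : ofBits (b :: l) = Nat.bit b (ofBits l) := rfl

lemma ofBits_bits (n : ℕ) : ofBits (Nat.bits n) = n := by
  induction n using Nat.binaryRec' with
  | zero => simp [ofBits]
  | bit b n h ih =>
    rw [Nat.bits_append_bit n b h]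
    simp only [List.foldr_cons, ofBits] at ih ⊢; rw [ih]

lemma bits_ofBits (l : BinStr) (h : l.getLast? ≠ some false) : Nat.bits (ofBits l) = l := by
  induction l with
  | nil => simp [ofBits]
  | cons b l ih =>
    rcases l with _ | ⟨b', l'⟩
    · rcases b with _|_
      · simp at h
      · simp [ofBits]
    · rw [ofBits_cons, Nat.bits_append_bit, ih]
      · simpa using h
      · intro h0
        have := ih (by simpa using h)
        rw [h0] at this
        simp [Nat.zero_bits] at this

lemma ofBits_lt (l : BinStr) : ofBits l < 2 ^ l.length := by
  induction l with
  | nil => simp [ofBits]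
  | cons b l ih =>
    rw [ofBits_cons]
    have : Nat.bit b (ofBits l) ≤ 2 * ofBits l + 1 := by
      rcases b with _|_ <;> simp [Nat.bit]
    calc Nat.bit b (ofBits l) ≤ 2 * ofBits l + 1 := this
    _ < 2 ^ (l.length + 1) := by rw [pow_succ]; omega

lemma primrec_ofBits : Primrec ofBits := by
  have : Primrec₂ (fun (b : Bool) (n : ℕ) => Nat.bit b n) := by
    have : Primrec₂ (fun (b : Bool) (n : ℕ) => cond b (2 * n + 1) (2 * n)) :=
      Primrec.cond Primrec.fst
        (Primrec.nat_add.comp (Primrec.nat_mul.comp (Primrec.const 2) Primrec.snd) (Primrec.const 1))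
        (Primrec.nat_mul.comp (Primrec.const 2) Primrec.snd)
    exact this.of_eq (fun b n => by cases b <;> simp [Nat.bit])
  exact (Primrec.list_foldr Primrec.id (Primrec.const 0)
    (this.comp (Primrec.fst.comp Primrec.snd) (Primrec.snd.comp Primrec.snd)).to₂)


/-- step-bounded simulation of `U · []` via a code `cU` -/
def Uapx (cU : Code) (t : ℕ) (p : BinStr) : Option BinStr :=
  (evaln t cU (encode (p, ([] : BinStr)))).bind fun e => (decode e : Option BinStr)

/-- the list of strings output by some program of length ≤ a within `t` steps -/
def listO (cU : Code) (a t : ℕ) : List BinStr :=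
  (List.range t).filterMap fun i =>
    (decode i : Option BinStr).bind fun p =>
      if p.length ≤ a then Uapx cU t p else none

/-- number of distinct elements of a list -/
def cardD : List BinStr → ℕ
  | [] => 0
  | x :: l => if x ∈ l then cardD l else cardD l + 1

lemma cardD_eq (l : List BinStr) : cardD l = l.toFinset.card := by
  induction l with
  | nil => simp [cardD]
  | cons x l ih =>
    by_cases h : x ∈ l <;>
      simp [cardD, h, ih, Finset.card_insert_of_notMem, List.mem_toFinset]

/-- self-delimiting encoding of a string -/
def dbl (w : BinStr) : BinStr := (w.flatMap fun b => [b, b]) ++ [true, false]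

lemma dbl_inj {w w' p p' : BinStr} (h : dbl w ++ p = dbl w' ++ p') : w = w' ∧ p = p' := by
  induction w generalizing w' with
  | nil =>
    cases w' with
    | nil => simpa [dbl] using h
    | cons b' l' => rcases b' with _|_ <;> simp [dbl] at h
  | cons b l ih =>
    cases w' with
    | nil => rcases b with _|_ <;> simp [dbl] at h
    | cons b' l' =>
      simp only [dbl, List.flatMap_cons, List.append_assoc, List.cons_append, List.nil_append,
        List.cons.injEq] at h
      obtain ⟨rfl, -, h⟩ := h
      have := ih (w' := l') (by simpa [dbl] using h)
      exact ⟨by rw [this.1], this.2⟩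

def parseOK (q : BinStr) (n : ℕ) : Bool :=
  (decode n : Option (BinStr × BinStr)).elim false fun wp => decide (q = dbl wp.1 ++ wp.2)

def goodm (l : List BinStr) (m : ℕ) : Bool :=
  (decode m : Option BinStr).elim false fun x => decide (x ∉ l)

def getW (n : ℕ) : BinStr := ((decode n : Option (BinStr × BinStr))).iget.1
def getP (n : ℕ) : BinStr := ((decode n : Option (BinStr × BinStr))).iget.2

/-- the search part: given (a, Ω), find the stage where enough strings appeared,
then output some string not among them. -/
def srch (cU : Code) : ℕ × ℕ →. BinStr := fun aZ =>
  (Nat.rfind fun t => Part.some (decide (aZ.2 ≤ cardD (listO cU aZ.1 t)))).bind fun t =>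
    (Nat.rfind fun m => Part.some (goodm (listO cU aZ.1 t) m)).map fun m =>
      ((decode m : Option BinStr)).iget

/-- the decompressor for the lower bound -/
def V (cU : Code) (U : BinStr → BinStr → Part BinStr) : BinStr → BinStr → Part BinStr :=
  fun q _ =>
    (Nat.rfind fun n => Part.some (parseOK q n)).bind fun n =>
      ((U (getP n) []).map fun s => (ofBits (getW n), ofBits s)).bind (srch cU)


section Computability

open Primrec in
lemma primrec_dbl : Primrec dbl := by
  have h2 : Primrec₂ fun (_ : BinStr) (b : Bool) => [b, b] :=
    (list_cons.comp Primrec.snd (list_cons.comp Primrec.snd (const []))).to₂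
  exact list_append.comp (list_flatMap Primrec.id h2) (const [true, false])

open Primrec in
lemma primrec_parseOK : Primrec₂ parseOK := by
  have heq : Primrec₂ fun (q : BinStr) (wp : BinStr × BinStr) =>
      decide (q = dbl wp.1 ++ wp.2) :=
    (Primrec.eq.comp Primrec.fst
      (list_append.comp (primrec_dbl.comp (fst.comp snd)) (snd.comp snd))).decide
  have := option_casesOn (o := fun p : BinStr × ℕ => (decode p.2 : Option (BinStr × BinStr)))
    (f := fun _ => false) (g := fun p wp => decide (p.1 = dbl wp.1 ++ wp.2))
    (Primrec.decode.comp snd) (const false) (heq.comp (fst.comp fst) snd).to₂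
  exact this.to₂.of_eq fun q n => by
    rcases h : (decode n : Option (BinStr × BinStr)) with - | wp <;> simp [parseOK, h]

open Primrec in
lemma primrec_memb : Primrec₂ fun (x : BinStr) (l : List BinStr) => decide (x ∈ l) := by
  have : Primrec₂ fun (x : BinStr) (l : List BinStr) =>
      decide (@List.idxOf BinStr instBEqOfDecidableEq x l < l.length) :=
    (PrimrecRel.comp Primrec.nat_lt (list_idxOf.comp fst snd) (list_length.comp snd)).decide
  exact this.of_eq fun x l => by simp [List.idxOf_lt_length_iff]

open Primrec in
lemma primrec_cardD : Primrec cardD := by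
  have hmem : Primrec fun x : List BinStr × BinStr × List BinStr × ℕ =>
      decide (x.2.1 ∈ x.2.2.1) :=
    primrec_memb.comp (fst.comp snd) (fst.comp (snd.comp snd))
  have hstep : Primrec fun x : List BinStr × BinStr × List BinStr × ℕ =>
      cond (decide (x.2.1 ∈ x.2.2.1)) x.2.2.2 (x.2.2.2 + 1) :=
    Primrec.cond hmem (snd.comp (snd.comp snd))
      (succ.comp (snd.comp (snd.comp snd)))
  have h := list_rec (f := fun l : List BinStr => l) (g := fun _ => (0 : ℕ))
    (h := fun (_ : List BinStr) (x : BinStr × List BinStr × ℕ) =>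
      cond (decide (x.1 ∈ x.2.1)) x.2.2 (x.2.2 + 1))
    Primrec.id (const 0) hstep
  exact h.of_eq fun l => by
    induction l with
    | nil => simp [cardD]
    | cons x l ih => by_cases hx : x ∈ l <;> simp [cardD, hx, ← ih]

open Primrec in
lemma primrec_goodm : Primrec₂ goodm := by
  have hg : Primrec₂ fun (l : List BinStr) (x : BinStr) => !(decide (x ∈ l)) :=
    (Primrec.dom_bool Bool.not).comp (primrec_memb.comp snd fst)
  have := option_casesOn (o := fun p : List BinStr × ℕ => (decode p.2 : Option BinStr))
    (f := fun _ => false) (g := fun p x => !(decide (x ∈ p.1)))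
    (Primrec.decode.comp snd) (const false) (hg.comp (fst.comp fst) snd).to₂
  exact this.to₂.of_eq fun l m => by
    rcases h : (decode m : Option BinStr) with - | x <;> simp [goodm, h]

open Primrec in
lemma primrec_Uapx (cU : Code) : Primrec₂ (Uapx cU) := by
  have he : Primrec fun p : ℕ × BinStr => evaln p.1 cU (encode (p.2, ([] : BinStr))) :=
    Nat.Partrec.Code.primrec_evaln.comp
      ((Primrec.pair (Primrec.pair fst (const cU))
        (Primrec.encode.comp (Primrec.pair snd (const ([] : BinStr))))))
  exact (option_bind he ((Primrec.decode (α := BinStr)).comp snd).to₂).to₂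

open Primrec in
lemma primrec_listO (cU : Code) : Primrec₂ (listO cU) := by
  have hin : Primrec₂ fun (p : ℕ × ℕ) (i : ℕ) =>
      (decode i : Option BinStr).bind fun q =>
        if q.length ≤ p.1 then Uapx cU p.2 q else none := by
    have hif : Primrec fun x : ((ℕ × ℕ) × ℕ) × BinStr =>
        if x.2.length ≤ x.1.1.1 then Uapx cU x.1.1.2 x.2 else none :=
      Primrec.ite (PrimrecRel.comp Primrec.nat_le (list_length.comp snd)
          (fst.comp (fst.comp fst)))
        ((primrec_Uapx cU).comp (snd.comp (fst.comp fst)) snd)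
        (const none)
    exact (option_bind (Primrec.decode.comp snd) hif.to₂).to₂
  exact (listFilterMap (list_range.comp snd) (hin.comp fst snd).to₂).to₂

set_option maxHeartbeats 1000000 in
open Partrec Computable in
lemma partrec_srch (cU : Code) : Partrec (srch cU) := by
  have h1 : Computable₂ fun (aZ : ℕ × ℕ) (t : ℕ) =>
      decide (aZ.2 ≤ cardD (listO cU aZ.1 t)) :=
    (PrimrecRel.comp Primrec.nat_le (Primrec.snd.comp Primrec.fst)
      (primrec_cardD.comp ((primrec_listO cU).comp (Primrec.fst.comp Primrec.fst)
        Primrec.snd))).decide.to_comp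
  have h2 : Computable₂ fun (x : (ℕ × ℕ) × ℕ) (m : ℕ) =>
      goodm (listO cU x.1.1 x.2) m :=
    (primrec_goodm.comp ((primrec_listO cU).comp
      (Primrec.fst.comp (Primrec.fst.comp Primrec.fst))
      (Primrec.snd.comp Primrec.fst)) Primrec.snd).to_comp
  have h3 : Computable fun (x : ((ℕ × ℕ) × ℕ) × ℕ) => ((decode x.2 : Option BinStr)).iget :=
    (Primrec.option_iget.comp (Primrec.decode.comp Primrec.snd)).to_comp
  exact (Partrec.rfind h1.partrec₂).bind
    (((Partrec.rfind h2.partrec₂).map h3.to₂).to₂)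

set_option maxHeartbeats 1000000 in
open Partrec Computable in
lemma partrec_V (cU : Code) (U : BinStr → BinStr → Part BinStr) (hU1 : Partrec₂ U) :
    Partrec₂ (V cU U) := by
  have hpar : Computable₂ fun (pr : BinStr × BinStr) (n : ℕ) => parseOK pr.1 n :=
    (primrec_parseOK.comp (Primrec.fst.comp Primrec.fst) Primrec.snd).to_comp
  have hgetP : Computable fun (x : (BinStr × BinStr) × ℕ) => getP x.2 :=
    (Primrec.snd.comp (Primrec.option_iget.comp (Primrec.decode.comp Primrec.snd))).to_comp
  have hmid : Partrec fun (x : (BinStr × BinStr) × ℕ) =>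
      (U (getP x.2) []).map fun s => (ofBits (getW x.2), ofBits s) := by
    refine Partrec.map (hU1.comp hgetP (Computable.const ([] : BinStr))) ?_
    exact ((Primrec.pair
      (primrec_ofBits.comp (Primrec.fst.comp
        (Primrec.option_iget.comp (Primrec.decode.comp (Primrec.snd.comp Primrec.fst)))))
      (primrec_ofBits.comp Primrec.snd)).to_comp).to₂
  exact (Partrec.rfind hpar.partrec₂).bind
    ((hmid.bind (((partrec_srch cU).comp Computable.snd).to₂)).to₂)

end Computability


section Correctness

variable {U : BinStr → BinStr → Part BinStr}

lemma C_le_of_mem {x p : BinStr} (h : x ∈ U p []) : C U x ≤ p.length :=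
  Nat.sInf_le ⟨p, rfl, h⟩

lemma exists_c0 (hU : IsUniversal U) : ∃ c0 : BinStr, ∀ x : BinStr, x ∈ U (c0 ++ x) [] := by
  have hD : IsDecompressor (fun p (_ : BinStr) => Part.some p) :=
    (Computable.fst : Computable fun pr : BinStr × BinStr => pr.1)
  obtain ⟨c0, hc⟩ := hU.2 _ hD
  exact ⟨c0, fun x => by rw [← hc x []]; exact Part.mem_some x⟩

lemma exists_min_prog (hU : IsUniversal U) (x : BinStr) :
    ∃ p : BinStr, p.length = C U x ∧ x ∈ U p [] := by
  obtain ⟨c0, hc0⟩ := exists_c0 hU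
  have hne : { n | ∃ p : BinStr, p.length = n ∧ x ∈ U p [] }.Nonempty :=
    ⟨(c0 ++ x).length, c0 ++ x, rfl, hc0 x⟩
  exact Nat.sInf_mem hne

/-- the set of strings of complexity at most `a` -/
def K (U : BinStr → BinStr → Part BinStr) (a : ℕ) : Set BinStr := { x | C U x ≤ a }

lemma K_finite (hU : IsUniversal U) (a : ℕ) : (K U a).Finite := by
  classical
  set f : BinStr → BinStr := fun x => (exists_min_prog hU x).choose with hf
  have hfl : ∀ x, (f x).length = C U x := fun x => (exists_min_prog hU x).choose_spec.1
  have hfm : ∀ x, x ∈ U (f x) [] := fun x => (exists_min_prog hU x).choose_spec.2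
  have hinj : Set.InjOn f (K U a) := by
    intro x _ y _ hxy
    exact Part.mem_unique (hfm x) (hxy ▸ hfm y)
  have himg : f '' K U a ⊆ { p : BinStr | p.length ≤ a } := by
    rintro - ⟨x, hx, rfl⟩
    exact (hfl x).le.trans hx
  exact Set.Finite.of_finite_image ((Set.Finite.subset (List.finite_length_le Bool a) himg)) hinj

lemma Omega_eq (hU : IsUniversal U) (a : ℕ) :
    Omega U a = (K_finite hU a).toFinset.card :=
  Set.ncard_eq_toFinset_card _ (K_finite hU a)

lemma Omega_lt (hU : IsUniversal U) (a : ℕ) : Omega U a < 2 ^ (a + 1) := by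
  classical
  set f : BinStr → BinStr := fun x => (exists_min_prog hU x).choose with hf
  have hfl : ∀ x, (f x).length = C U x := fun x => (exists_min_prog hU x).choose_spec.1
  have hfm : ∀ x, x ∈ U (f x) [] := fun x => (exists_min_prog hU x).choose_spec.2
  set g : BinStr → ℕ := fun x => ofBits (f x ++ [true]) with hg
  have hbits : ∀ x : BinStr, Nat.bits (g x) = f x ++ [true] := by
    intro x
    apply bits_ofBits
    rw [List.getLast?_concat]
    simp
  have hginj : Set.InjOn g (K U a) := by
    intro x hx y hy hxy
    have : f x ++ [true] = f y ++ [true] := by rw [← hbits x, ← hbits y, hxy]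
    have hfeq : f x = f y := by simpa using this
    exact Part.mem_unique (hfm x) (hfeq ▸ hfm y)
  have hmap : ∀ x ∈ (K_finite hU a).toFinset, g x ∈ Finset.Ico 1 (2 ^ (a + 1)) := by
    intro x hx
    rw [Set.Finite.mem_toFinset] at hx
    refine Finset.mem_Ico.2 ⟨?_, ?_⟩
    · rcases Nat.eq_zero_or_pos (g x) with h0 | h1
      · exfalso
        have := hbits x
        rw [h0, Nat.zero_bits] at this
        simpa using this.symm
      · exact h1
    · have h1 : g x < 2 ^ (f x ++ [true]).length := ofBits_lt _
      have h2 : (f x ++ [true]).length ≤ a + 1 := by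
        have : (f x).length ≤ a := (hfl x).le.trans hx
        simp [this]
      exact h1.trans_le (Nat.pow_le_pow_right (by norm_num) h2)
  have hcard := Finset.card_le_card_of_injOn g hmap (by
    intro x hx y hy hxy
    exact hginj (by simpa [Set.Finite.mem_toFinset] using hx)
      (by simpa [Set.Finite.mem_toFinset] using hy) hxy)
  rw [Omega_eq hU a]
  have : (Finset.Ico 1 (2 ^ (a + 1))).card = 2 ^ (a + 1) - 1 := by
    rw [Nat.card_Ico]
  have hpos : 1 ≤ 2 ^ (a + 1) := Nat.one_le_two_pow
  omega

lemma upper_bound (hU : IsUniversal U) {c0 : BinStr} (hc0 : ∀ x : BinStr, x ∈ U (c0 ++ x) [])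
    (a : ℕ) : C U (Nat.bits (Omega U a)) ≤ c0.length + (a + 1) := by
  have h1 : C U (Nat.bits (Omega U a)) ≤ (c0 ++ Nat.bits (Omega U a)).length :=
    C_le_of_mem (hc0 _)
  have h2 : (Nat.bits (Omega U a)).length ≤ a + 1 := by
    rw [Nat.size_eq_bits_len]
    exact Nat.size_le.2 (Omega_lt hU a)
  simpa using h1.trans (by simp; omega)

section Approx

variable {cU : Code}

/-- `cU` computes `U ⟨·,·⟩` at the level of `ℕ`. -/
def CodeFor (cU : Code) (U : BinStr → BinStr → Part BinStr) : Prop :=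
  eval cU = fun n =>
    Part.bind ((decode n : Option (BinStr × BinStr)) : Part (BinStr × BinStr))
      fun a => (U a.1 a.2).map encode

lemma exists_codeFor (hU1 : Partrec₂ U) : ∃ cU : Code, CodeFor cU U := by
  obtain ⟨cU, hc⟩ := Nat.Partrec.Code.exists_code.1 hU1
  exact ⟨cU, hc⟩

lemma mem_eval_iff (h : CodeFor cU U) {p y x : BinStr} :
    encode x ∈ eval cU (encode (p, y)) ↔ x ∈ U p y := by
  rw [h]
  simp only [Encodable.encodek]
  constructor
  · rintro he
    simp only [Part.coe_some, Part.bind_some, Part.mem_map_iff] at he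
    obtain ⟨x', hx', hxx⟩ := he
    rwa [Encodable.encode_injective hxx] at hx'
  · intro hx
    simp only [Part.coe_some, Part.bind_some, Part.mem_map_iff]
    exact ⟨x, hx, rfl⟩

lemma Uapx_sound (h : CodeFor cU U) {t : ℕ} {p x : BinStr}
    (hx : Uapx cU t p = some x) : x ∈ U p [] := by
  rw [Uapx, Option.bind_eq_some_iff] at hx
  obtain ⟨e, he, hd⟩ := hx
  have hev : e ∈ eval cU (encode (p, ([] : BinStr))) := evaln_sound he
  rw [h] at hev
  simp only [Encodable.encodek, Part.coe_some, Part.bind_some, Part.mem_map_iff] at hev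
  obtain ⟨x', hx', rfl⟩ := hev
  rw [Encodable.encodek] at hd
  cases hd
  exact hx'

lemma Uapx_complete (h : CodeFor cU U) {p x : BinStr} (hx : x ∈ U p []) :
    ∃ t, Uapx cU t p = some x := by
  have hev : encode x ∈ eval cU (encode (p, ([] : BinStr))) := (mem_eval_iff h).2 hx
  obtain ⟨t, ht⟩ := evaln_complete.1 hev
  refine ⟨t, ?_⟩
  rw [Uapx, ht]
  simp [Encodable.encodek]

lemma Uapx_mono {t t' : ℕ} {p x : BinStr} (htt : t ≤ t')
    (hx : Uapx cU t p = some x) : Uapx cU t' p = some x := by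
  rw [Uapx, Option.bind_eq_some_iff] at hx ⊢
  obtain ⟨e, he, hd⟩ := hx
  exact ⟨e, evaln_mono htt he, hd⟩

lemma listO_sound {a t : ℕ} {x : BinStr} (hx : x ∈ listO cU a t) :
    ∃ p : BinStr, p.length ≤ a ∧ Uapx cU t p = some x := by
  rw [listO, List.mem_filterMap] at hx
  obtain ⟨i, -, hi⟩ := hx
  rw [Option.bind_eq_some_iff] at hi
  obtain ⟨p, -, hp⟩ := hi
  by_cases hl : p.length ≤ a
  · rw [if_pos hl] at hp
    exact ⟨p, hl, hp⟩
  · rw [if_neg hl] at hp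
    exact absurd hp (by simp)

lemma listO_complete {a t : ℕ} {p x : BinStr} (hi : encode p < t) (hl : p.length ≤ a)
    (hx : Uapx cU t p = some x) : x ∈ listO cU a t := by
  rw [listO, List.mem_filterMap]
  refine ⟨encode p, List.mem_range.2 hi, ?_⟩
  rw [Encodable.encodek]
  simpa [hl] using hx

lemma listO_mono {a t t' : ℕ} {x : BinStr} (htt : t ≤ t') (hx : x ∈ listO cU a t) :
    x ∈ listO cU a t' := by
  rw [listO, List.mem_filterMap] at hx ⊢
  obtain ⟨i, hir, hi⟩ := hx
  refine ⟨i, List.mem_range.2 ((List.mem_range.1 hir).trans_le htt), ?_⟩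
  rw [Option.bind_eq_some_iff] at hi ⊢
  obtain ⟨p, hp, hif⟩ := hi
  refine ⟨p, hp, ?_⟩
  by_cases hl : p.length ≤ a
  · rw [if_pos hl] at hif ⊢
    exact Uapx_mono htt hif
  · rw [if_neg hl] at hif
    exact absurd hif (by simp)

lemma listO_subK (h : CodeFor cU U) {a t : ℕ} {x : BinStr} (hx : x ∈ listO cU a t) :
    C U x ≤ a := by
  obtain ⟨p, hl, hp⟩ := listO_sound hx
  exact (C_le_of_mem (Uapx_sound h hp)).trans hl

lemma exists_stage (hU : IsUniversal U) (h : CodeFor cU U) (a : ℕ) :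
    ∃ t, Omega U a ≤ cardD (listO cU a t) := by
  classical
  have hfin := K_finite hU a
  set tf : BinStr → ℕ := fun x =>
    if hx : ∃ t, x ∈ listO cU a t then Nat.find hx else 0 with htf
  set T : ℕ := hfin.toFinset.sup tf with hT
  have hmem : ∀ x ∈ K U a, x ∈ listO cU a T := by
    intro x hx
    obtain ⟨p, hpl, hpm⟩ := exists_min_prog hU x
    obtain ⟨t0, ht0⟩ := Uapx_complete h hpm
    have hex : ∃ t, x ∈ listO cU a t :=
      ⟨max (t0 + 1) (encode p + 1),
        listO_complete (lt_of_lt_of_le (Nat.lt_succ_self _) (le_max_right _ _))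
          (hpl.le.trans hx) (Uapx_mono (le_trans (Nat.le_succ _) (le_max_left _ _)) ht0)⟩
    have h1 : x ∈ listO cU a (tf x) := by
      simp only [htf, dif_pos hex]
      exact Nat.find_spec hex
    exact listO_mono (Finset.le_sup (hfin.mem_toFinset.2 hx)) h1
  refine ⟨T, ?_⟩
  rw [Omega_eq hU a, cardD_eq]
  apply Finset.card_le_card
  intro x hx
  rw [List.mem_toFinset]
  exact hmem x (hfin.mem_toFinset.1 hx)

lemma stage_exact (hU : IsUniversal U) (h : CodeFor cU U) {a t : ℕ}
    (hc : Omega U a ≤ cardD (listO cU a t)) {x : BinStr} (hx : x ∉ listO cU a t) :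
    a < C U x := by
  classical
  have hfin := K_finite hU a
  have hsub : (listO cU a t).toFinset ⊆ hfin.toFinset := by
    intro y hy
    rw [List.mem_toFinset] at hy
    exact hfin.mem_toFinset.2 (listO_subK h hy)
  have heq : (listO cU a t).toFinset = hfin.toFinset := by
    apply Finset.eq_of_subset_of_card_le hsub
    rw [← Omega_eq hU a, ← cardD_eq]
    exact hc
  by_contra hle
  push_neg at hle
  have : x ∈ (listO cU a t).toFinset := by
    rw [heq, hfin.mem_toFinset]; exact hle
  exact hx (List.mem_toFinset.1 this)

end Approx

lemma dbl_length (w : BinStr) : (dbl w).length = 2 * w.length + 2 := by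
  induction w with
  | nil => simp [dbl]
  | cons b w ih => simp [dbl] at ih ⊢; omega

lemma exists_mem_V (hU : IsUniversal U) {cU : Code} (h : CodeFor cU U) (a : ℕ)
    (pstar : BinStr) (hps : Nat.bits (Omega U a) ∈ U pstar []) :
    ∃ x : BinStr, x ∈ V cU U (dbl (Nat.bits a) ++ pstar) [] ∧ a < C U x := by
  classical
  set q : BinStr := dbl (Nat.bits a) ++ pstar with hq
  -- stage 1 : parsing
  have hP1 : (Nat.rfind fun n => Part.some (parseOK q n)).Dom := by
    apply Nat.rfind_dom.2
    refine ⟨encode ((Nat.bits a), pstar), ?_, fun {m} _ => trivial⟩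
    rw [Part.mem_some_iff, parseOK, Encodable.encodek]
    simp only [Option.elim_some]
    simp [hq]
  set n1 := (Nat.rfind fun n => Part.some (parseOK q n)).get hP1 with hn1def
  have hn1 : n1 ∈ Nat.rfind fun n => Part.some (parseOK q n) := Part.get_mem hP1
  have hspec1 : parseOK q n1 = true := (Part.mem_some_iff.1 (Nat.rfind_spec hn1)).symm
  rw [parseOK] at hspec1
  rcases hd : (decode n1 : Option (BinStr × BinStr)) with - | wp
  · rw [hd] at hspec1; simp at hspec1
  rw [hd] at hspec1
  simp only [Option.elim_some, decide_eq_true_eq] at hspec1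
  obtain ⟨hw, hp⟩ := dbl_inj (hq ▸ hspec1 : dbl (Nat.bits a) ++ pstar = dbl wp.1 ++ wp.2)
  have hgw : getW n1 = Nat.bits a := by rw [getW, hd]; simp [hw]
  have hgp : getP n1 = pstar := by rw [getP, hd]; simp [hp]
  -- the intermediate value
  have haZ : (a, Omega U a) ∈ ((U (getP n1) []).map fun s => (ofBits (getW n1), ofBits s)) := by
    rw [hgp, hgw]
    exact (Part.mem_map_iff _).2 ⟨Nat.bits (Omega U a), hps, by simp [ofBits_bits]⟩
  -- stage 2 : finding a sufficient stage
  have hP2 : (Nat.rfind fun t =>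
      Part.some (decide (Omega U a ≤ cardD (listO cU a t)))).Dom := by
    apply Nat.rfind_dom.2
    obtain ⟨t0, ht0⟩ := exists_stage hU h a
    exact ⟨t0, by simpa using ht0, fun _ => trivial⟩
  set t1 := (Nat.rfind fun t =>
      Part.some (decide (Omega U a ≤ cardD (listO cU a t)))).get hP2 with ht1def
  have ht1 : t1 ∈ Nat.rfind fun t =>
      Part.some (decide (Omega U a ≤ cardD (listO cU a t))) := Part.get_mem hP2
  have hspec2 : Omega U a ≤ cardD (listO cU a t1) :=
    of_decide_eq_true (Part.mem_some_iff.1 (Nat.rfind_spec ht1)).symm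
  -- stage 3 : finding a string not in the list
  have hxex : ∃ x : BinStr, x ∉ listO cU a t1 := by
    have hfin : {x : BinStr | x ∈ listO cU a t1}.Finite := (listO cU a t1).finite_toSet
    obtain ⟨x, hx⟩ := hfin.infinite_compl.nonempty
    exact ⟨x, hx⟩
  have hP3 : (Nat.rfind fun m => Part.some (goodm (listO cU a t1) m)).Dom := by
    apply Nat.rfind_dom.2
    obtain ⟨x, hx⟩ := hxex
    refine ⟨encode x, ?_, fun {m} _ => trivial⟩
    rw [Part.mem_some_iff, goodm, Encodable.encodek]
    simp only [Option.elim_some]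
    exact (decide_eq_true hx).symm
  set m1 := (Nat.rfind fun m => Part.some (goodm (listO cU a t1) m)).get hP3 with hm1def
  have hm1 : m1 ∈ Nat.rfind fun m => Part.some (goodm (listO cU a t1) m) := Part.get_mem hP3
  have hspec3 : goodm (listO cU a t1) m1 = true := (Part.mem_some_iff.1 (Nat.rfind_spec hm1)).symm
  rw [goodm] at hspec3
  rcases hd3 : (decode m1 : Option BinStr) with - | xs
  · rw [hd3] at hspec3; simp at hspec3
  rw [hd3] at hspec3
  simp only [Option.elim_some, decide_eq_true_eq] at hspec3
  refine ⟨xs, ?_, stage_exact hU h hspec2 hspec3⟩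
  -- assemble the membership proof
  refine Part.mem_bind_iff.2 ⟨n1, hn1, ?_⟩
  refine Part.mem_bind_iff.2 ⟨(a, Omega U a), haZ, ?_⟩
  refine Part.mem_bind_iff.2 ⟨t1, ht1, ?_⟩
  refine (Part.mem_map_iff _).2 ⟨m1, hm1, ?_⟩
  rw [hd3]

end Correctness

end OmegaAux

open OmegaAux in
theorem omega_complexity
    (U : BinStr → BinStr → Part BinStr) (hU : IsUniversal U) :
    ∃ c : ℕ, ∀ a : ℕ,
      C U (Nat.bits (Omega U a)) ≤ a + c * (Nat.log 2 a + 1) ∧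
      a ≤ C U (Nat.bits (Omega U a)) + c * (Nat.log 2 a + 1) := by
  classical
  obtain ⟨c0, hc0⟩ := exists_c0 hU
  obtain ⟨cU, hcU⟩ := exists_codeFor hU.1
  obtain ⟨cV, hcV⟩ := hU.2 (V cU U) (partrec_V cU U hU.1)
  refine ⟨c0.length + cV.length + 5, fun a => ⟨?_, ?_⟩⟩
  · have h1 := upper_bound hU hc0 a
    have h2 : c0.length + cV.length + 5 ≤
        (c0.length + cV.length + 5) * (Nat.log 2 a + 1) :=
      Nat.le_mul_of_pos_right _ (by omega)
    omega
  · obtain ⟨ps, hpl, hpm⟩ := exists_min_prog hU (Nat.bits (Omega U a))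
    obtain ⟨xs, hxV, hxC⟩ := exists_mem_V hU hcU a ps hpm
    rw [hcV] at hxV
    have h1 : C U xs ≤ (cV ++ (dbl (Nat.bits a) ++ ps)).length := C_le_of_mem hxV
    rw [List.length_append, List.length_append, dbl_length] at h1
    have hsz : (Nat.bits a).length ≤ Nat.log 2 a + 1 := by
      rw [Nat.size_eq_bits_len]
      exact Nat.size_le.2 (by simpa [Nat.log2_eq_log_two] using
        Nat.lt_pow_succ_log_self (by norm_num) a)
    set L := Nat.log 2 a with hL
    have key : cV.length + 2 * (Nat.bits a).length + 2 + 1 ≤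
        (c0.length + cV.length + 5) * (L + 1) := by
      have h6 : (cV.length + 5) * (L + 1) ≤ (c0.length + cV.length + 5) * (L + 1) :=
        Nat.mul_le_mul_right _ (by omega)
      have h7 : (cV.length + 5) * (L + 1) = cV.length * (L + 1) + 5 * L + 5 := by ring
      have h8 : cV.length ≤ cV.length * (L + 1) := Nat.le_mul_of_pos_right _ (by omega)
      omega
    omega
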